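/- For 0 ≤ x < 1, the Rogers dilogarithm satisfies L(x/(1+x)) = -Li₂(-x) - (1/2)·log x · log(1+x), where L(x) = Li₂(x) + (1/2)·log x · log(1-x) and Li₂(x) = -∫₀ˣ log(1-y)/y dy. (For x = 0 the logarithmic terms are interpreted as 0 by continuity.) -/

import Mathlib

open MeasureTheory Real

/-- The Euler dilogarithm `Li₂(x) = -∫₀ˣ log(1-y)/y dy`. -/
noncomputable def Li2 (x : ℝ) : ℝ := -∫ y in (0:ℝ)..x, Real.log (1 - y) / y

/-- The Rogers dilogarithm `L(x) = Li₂(x) + (1/2)·log x·log(1-x)`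
(the logarithmic term vanishes at `x = 0` since `Real.log 0 = 0`). -/
noncomputable def RL (x : ℝ) : ℝ := Li2 x + (1/2) * Real.log x * Real.log (1 - x)

namespace RogersAux

noncomputable def f (y : ℝ) : ℝ := Real.log (1 - y) / y

lemma f_meas : Measurable f :=
  (Real.measurable_log.comp (measurable_const.sub measurable_id)).div measurable_id

lemma abs_f_le {r y : ℝ} (hr0 : 0 ≤ r) (hr : r < 1) (hy : |y| ≤ r) :
    |f y| ≤ 1 / (1 - r) := by
  have h1r : (0:ℝ) < 1 - r := by linarith
  obtain ⟨hy1, hy2⟩ := abs_le.mp hy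
  rcases lt_trichotomy y 0 with hy0 | hy0 | hy0
  · have h1y : (0:ℝ) < 1 - y := by linarith
    have hlog : Real.log (1 - y) ≤ -y := by
      have := Real.log_le_sub_one_of_pos h1y; linarith
    have hlog0 : 0 ≤ Real.log (1 - y) := Real.log_nonneg (by linarith)
    have heq : |f y| = Real.log (1 - y) / (-y) := by
      rw [f, abs_div, abs_of_nonneg hlog0, abs_of_neg hy0]
    rw [heq]
    have h2 : Real.log (1 - y) / (-y) ≤ 1 := by
      rw [div_le_one (by linarith)]; linarith
    calc Real.log (1-y) / (-y) ≤ 1 := h2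
      _ ≤ 1 / (1 - r) := by rw [le_div_iff₀ h1r]; nlinarith
  · rw [hy0]
    have hf0 : f 0 = 0 := by simp [f]
    rw [hf0, abs_zero]
    exact (div_pos one_pos h1r).le
  · have h1y : (0:ℝ) < 1 - y := by linarith
    have hlog : -Real.log (1 - y) ≤ y / (1 - y) := by
      have h := Real.log_le_sub_one_of_pos (x := (1 - y)⁻¹) (by positivity)
      rw [Real.log_inv] at h
      have h2 : (1 - y)⁻¹ - 1 = y / (1 - y) := by field_simp; ring
      linarith [h2 ▸ h]
    have hlog0 : Real.log (1 - y) ≤ 0 :=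
      Real.log_nonpos (by linarith) (by linarith)
    have heq : |f y| = -Real.log (1 - y) / y := by
      rw [f, abs_div, abs_of_nonpos hlog0, abs_of_pos hy0]
    rw [heq, div_le_div_iff₀ hy0 h1r]
    have : -Real.log (1-y) * (1 - r) ≤ (y / (1-y)) * (1 - y) := by
      apply mul_le_mul hlog (by linarith) (by linarith)
      · positivity
    rw [div_mul_cancel₀] at this
    · linarith
    · linarith

lemma f_intInt {s r : ℝ} (hr0 : 0 ≤ r) (hr : r < 1) (hs : |s| ≤ r) :
    IntervalIntegrable f volume 0 s := by
  rw [intervalIntegrable_iff]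
  apply Measure.integrableOn_of_bounded (M := 1/(1-r))
    (by rw [Set.uIoc]; exact measure_Ioc_lt_top.ne)
    f_meas.aestronglyMeasurable
  filter_upwards [ae_restrict_mem measurableSet_uIoc] with y hy
  rw [Real.norm_eq_abs]
  apply abs_f_le hr0 hr
  rcases Set.mem_uIoc.mp hy with ⟨h1, h2⟩ | ⟨h1, h2⟩
  · rw [abs_le]; constructor <;> [linarith [abs_le.mp hs] ; linarith [(abs_le.mp hs).2]]
  · rw [abs_le]; constructor <;> [linarith [(abs_le.mp hs).1] ; linarith [abs_le.mp hs]]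

lemma Li2_hasDeriv {t : ℝ} (ht : t ≠ 0) (ht1 : |t| < 1) :
    HasDerivAt Li2 (-(Real.log (1 - t) / t)) t := by
  have hr0 : (0:ℝ) ≤ (|t| + 1)/2 := by positivity
  have hr1 : (|t| + 1)/2 < 1 := by linarith
  have hts : |t| ≤ (|t| + 1)/2 := by linarith
  have hint : IntervalIntegrable f volume 0 t := f_intInt hr0 hr1 hts
  have hc : ContinuousAt f t := by
    apply ContinuousAt.div
    · have h1t : (1:ℝ) - t ≠ 0 := by
        have h := abs_lt.mp ht1
        intro hh
        have := sub_eq_zero.mp hh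
        linarith
      exact (Real.continuousAt_log h1t).comp (continuous_const.sub continuous_id).continuousAt
    · exact continuousAt_id
    · exact ht
  have := intervalIntegral.integral_hasDerivAt_right hint
    (f_meas.stronglyMeasurable.stronglyMeasurableAtFilter) hc
  exact this.neg

noncomputable def g (t : ℝ) : ℝ :=
  Li2 (t/(1+t)) + Li2 (-t) + (1/2) * (Real.log (1+t))^2

lemma g_hasDeriv {t : ℝ} (ht0 : 0 < t) (ht1 : t < 1) : HasDerivAt g 0 t := by
  have h1t : (0:ℝ) < 1 + t := by linarith
  have hu0 : 0 < t/(1+t) := by positivity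
  have hu1 : t/(1+t) < 1 := by rw [div_lt_one h1t]; linarith
  -- derivative of t ↦ t/(1+t)
  have hq : HasDerivAt (fun s : ℝ => s/(1+s)) (1/(1+t)^2) t := by
    have := (hasDerivAt_id t).div ((hasDerivAt_id t).const_add 1) (by simp only [id_eq]; exact ne_of_gt h1t)
    refine this.congr_deriv ?_
    simp only [id_eq]; ring
  have hL1 : HasDerivAt Li2 (-(Real.log (1 - t/(1+t)) / (t/(1+t)))) (t/(1+t)) :=
    Li2_hasDeriv (ne_of_gt hu0) (by rw [abs_of_pos hu0]; exact hu1)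
  have hC1 : HasDerivAt (fun s => Li2 (s/(1+s)))
      (-(Real.log (1 - t/(1+t)) / (t/(1+t))) * (1/(1+t)^2)) t := by have := hL1.comp t hq; exact this
  have hL2 : HasDerivAt Li2 (-(Real.log (1 - (-t)) / (-t))) (-t) :=
    Li2_hasDeriv (by linarith) (by rw [abs_of_neg (by linarith)]; linarith)
  have hC2 : HasDerivAt (fun s => Li2 (-s))
      ((-(Real.log (1 - (-t)) / (-t))) * (-1)) t := by
    exact hL2.comp t (hasDerivAt_neg t)
  have hC3 : HasDerivAt (fun s => (1/2) * (Real.log (1+s))^2)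
      ((1/2) * (2 * Real.log (1+t) * (1/(1+t)))) t := by
    have hlog : HasDerivAt (fun s : ℝ => Real.log (1+s)) (1/(1+t)) t := by
      have := (Real.hasDerivAt_log (ne_of_gt h1t)).comp t ((hasDerivAt_id t).const_add 1)
      exact this.congr_deriv (by simp)
    simpa using ((hlog.pow 2).const_mul (1/2 : ℝ))
  have := (hC1.add hC2).add hC3
  refine this.congr_deriv ?_
  have h1 : 1 - t/(1+t) = 1/(1+t) := by field_simp; ring
  have h2 : Real.log (1 - t/(1+t)) = -Real.log (1+t) := by
    rw [h1, one_div, Real.log_inv]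
  have h3 : Real.log (1 - (-t)) = Real.log (1+t) := by ring_nf
  rw [h2, h3]
  field_simp
  ring

lemma abs_Li2_le {s : ℝ} (hs : |s| ≤ 1/2) : |Li2 s| ≤ 2 * |s| := by
  have : |Li2 s| = ‖∫ y in (0:ℝ)..s, f y‖ := by
    rw [Li2]; simp [f, Real.norm_eq_abs]
  rw [this]
  have := intervalIntegral.norm_integral_le_of_norm_le_const (C := 2) (a := (0:ℝ)) (b := s)
    (f := f) ?_
  · simpa using this
  · intro y hy
    rw [Real.norm_eq_abs]
    have h2 : |y| ≤ 1/2 := by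
      rcases Set.mem_uIoc.mp hy with ⟨h1, h2⟩ | ⟨h1, h2⟩
      · rw [abs_le]; constructor <;> [linarith [abs_le.mp hs] ; linarith [(abs_le.mp hs).2]]
      · rw [abs_le]; constructor <;> [linarith [(abs_le.mp hs).1] ; linarith [abs_le.mp hs]]
    have hb := abs_f_le (r := 1/2) (by norm_num) (by norm_num) h2
    exact hb.trans (by norm_num)

lemma Li2_tendsto : Filter.Tendsto Li2 (nhds 0) (nhds 0) := by
  apply squeeze_zero_norm' (a := fun s => 2 * |s|)
  · filter_upwards [Metric.ball_mem_nhds (0:ℝ) (by norm_num : (0:ℝ) < 1/2)] with s hs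
    simp only [Metric.mem_ball, Real.dist_eq, sub_zero] at hs
    simpa [Real.norm_eq_abs] using abs_Li2_le hs.le
  · have : Filter.Tendsto (fun s : ℝ => 2 * |s|) (nhds 0) (nhds (2 * |(0:ℝ)|)) :=
      (continuous_abs.continuousAt).const_mul 2
    simpa using this

lemma g_eq_zero {x : ℝ} (hx0 : 0 < x) (hx1 : x < 1) : g x = 0 := by
  have key : ∀ a ∈ Set.Ioc (0:ℝ) x, g a = g x := by
    intro a ha
    have hc : ContinuousOn g (Set.Icc a x) := by
      intro t ht
      exact (g_hasDeriv (lt_of_lt_of_le ha.1 ht.1) (lt_of_le_of_lt ht.2 hx1)).continuousAt.continuousWithinAt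
    have hd : ∀ t ∈ Set.Ico a x, HasDerivWithinAt g 0 (Set.Ici t) t := by
      intro t ht
      exact (g_hasDeriv (lt_of_lt_of_le ha.1 ht.1) (lt_trans ht.2 hx1)).hasDerivWithinAt
    exact (constant_of_has_deriv_right_zero hc hd x (Set.mem_Icc.mpr ⟨ha.2, le_refl x⟩)).symm
  -- g tends to 0 at 0+
  have hg0 : Filter.Tendsto g (nhdsWithin 0 (Set.Ioi 0)) (nhds 0) := by
    have h1 : Filter.Tendsto (fun a : ℝ => a/(1+a)) (nhds 0) (nhds 0) := by
      have : ContinuousAt (fun a : ℝ => a/(1+a)) 0 :=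
        ContinuousAt.div continuousAt_id (continuous_const.add continuous_id).continuousAt (by norm_num)
      simpa using this.tendsto
    have h2 : Filter.Tendsto (fun a : ℝ => Real.log (1+a)) (nhds 0) (nhds 0) := by
      have : ContinuousAt (fun a : ℝ => Real.log (1+a)) 0 :=
        (Real.continuousAt_log (by norm_num)).comp (continuous_const.add continuous_id).continuousAt
      simpa using this.tendsto
    have : Filter.Tendsto g (nhds 0) (nhds ((0 + 0) + (1/2) * 0^2)) := by
      apply Filter.Tendsto.add
      apply Filter.Tendsto.add
      · exact Li2_tendsto.comp h1
      · exact Li2_tendsto.comp (by simpa using (continuous_neg.tendsto (0:ℝ)))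
      · exact (h2.pow 2).const_mul (1/2)
    simpa using this.mono_left nhdsWithin_le_nhds
  have hconst : Filter.Tendsto g (nhdsWithin 0 (Set.Ioi 0)) (nhds (g x)) := by
    apply Filter.Tendsto.congr' _ tendsto_const_nhds
    filter_upwards [Ioc_mem_nhdsGT_of_mem (Set.mem_Ico.mpr ⟨le_refl 0, hx0⟩)] with a ha
    exact (key a ha).symm
  exact tendsto_nhds_unique hconst hg0

end RogersAux

theorem rogers_alt_expression (x : ℝ) (hx0 : 0 ≤ x) (hx1 : x < 1) :
    RL (x / (1 + x)) = -Li2 (-x) - (1/2) * Real.log x * Real.log (1 + x) := by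
  rcases eq_or_lt_of_le hx0 with h0 | h0
  · subst h0
    simp [RL, Li2]
  · have h1x : (0:ℝ) < 1 + x := by linarith
    have hkey := RogersAux.g_eq_zero h0 hx1
    rw [RogersAux.g] at hkey
    have hu1 : 1 - x/(1+x) = 1/(1+x) := by field_simp; ring
    have h2 : Real.log (1 - x/(1+x)) = -Real.log (1+x) := by
      rw [hu1, one_div, Real.log_inv]
    have h3 : Real.log (x/(1+x)) = Real.log x - Real.log (1+x) :=
      Real.log_div (ne_of_gt h0) (ne_of_gt h1x)
    rw [RL, h2, h3]
    nlinarith [hkey]
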